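/- Let ψ : K → ℝ be a continuous function on a compact abelian group K satisfying Δ_h^3 ψ(y) = 0 for all h, y ∈ K (third-order finite differences vanish), and ψ(0) = 0. Then ψ ≡ 0 on K. -/

import Mathlib

/-- The finite difference operator `Δ_h ψ (y) = ψ (y + h) - ψ y`. -/
def finDiff {K : Type*} [AddCommGroup K] (h : K) (ψ : K → ℝ) : K → ℝ :=
  fun y => ψ (y + h) - ψ y

lemma rec3_zero (g : ℕ → ℝ) (h0 : g 0 = 0) (h1 : g 1 = 0) (h2 : g 2 = 0)
    (hrec : ∀ n, g (n+3) = 3*g (n+2) - 3*g (n+1) + g n) : ∀ n, g n = 0 := by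
  intro n
  induction n using Nat.strong_induction_on with
  | _ n ih =>
    match n with
    | 0 => exact h0
    | 1 => exact h1
    | 2 => exact h2
    | (m+3) =>
      rw [hrec m, ih (m+2) (by omega), ih (m+1) (by omega), ih m (by omega)]; ring

lemma quad_bounded_zero (A B C : ℝ) (hb : ∀ n : ℕ, |A * n^2 + B * n| ≤ C) :
    A = 0 ∧ B = 0 := by
  have hC : 0 ≤ C := by have := hb 0; simp at this; linarith [abs_nonneg (A*0+B*0), this]
  have hA : A = 0 := by
    by_contra hA
    have hApos : 0 < |A| := abs_pos.mpr hA
    obtain ⟨n, hn⟩ := exists_nat_gt (3*C/(2 * |A|))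
    have hn1 : (1:ℝ) ≤ n := by
      have : 0 ≤ 3*C/(2 * |A|) := by positivity
      have : (0:ℝ) < n := lt_of_le_of_lt this hn
      exact_mod_cast Nat.one_le_iff_ne_zero.mpr (by exact_mod_cast this.ne')
    have h1 := hb n
    have h2 := hb (2*n)
    have key : 2 * |A| * (n:ℝ)^2 ≤ 3*C := by
      have b1 := abs_le.mp h1
      have b2 := abs_le.mp h2
      push_cast at b2
      rcases abs_cases A with ⟨hA1, _⟩ | ⟨hA1, _⟩ <;> rw [hA1] <;> nlinarith [b1.1, b1.2, b2.1, b2.2]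
    have hsq : (n:ℝ) ≤ (n:ℝ)^2 := by nlinarith
    have : 3*C/(2 * |A|) * (2 * |A|) < (n:ℝ) * (2 * |A|) := by
      exact mul_lt_mul_of_pos_right hn (by positivity)
    rw [div_mul_cancel₀ _ (by positivity : (2 * |A|) ≠ 0)] at this
    nlinarith
  have hB : B = 0 := by
    by_contra hB
    have hBpos : 0 < |B| := abs_pos.mpr hB
    obtain ⟨n, hn⟩ := exists_nat_gt (C/|B|)
    have h1 := hb n
    rw [hA] at h1
    simp at h1
    have : C/|B| * |B| < (n:ℝ) * |B| := mul_lt_mul_of_pos_right hn hBpos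
    rw [div_mul_cancel₀ _ (by positivity : |B| ≠ 0)] at this
    have : abs ((n:ℝ)) = (n:ℝ) := abs_of_nonneg (by positivity)
    nlinarith [abs_nonneg B, h1]
  exact ⟨hA, hB⟩

/-- A continuous real function on a compact abelian group whose third finite
differences all vanish and which vanishes at `0` is identically zero. -/
theorem continuous_finDiff_three_zero
    {K : Type*} [AddCommGroup K] [TopologicalSpace K] [IsTopologicalAddGroup K]
    [CompactSpace K] (ψ : K → ℝ) (hcont : Continuous ψ)
    (hdiff : ∀ h y : K, finDiff h (finDiff h (finDiff h ψ)) y = 0)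
    (h0 : ψ 0 = 0) : ∀ y : K, ψ y = 0 := by
  -- bound on ψ
  obtain ⟨x, -, hx⟩ := (isCompact_univ : IsCompact (Set.univ : Set K)).exists_isMaxOn
    ⟨0, Set.mem_univ 0⟩ hcont.abs.continuousOn
  set C := |ψ x| with hCdef
  have hbound : ∀ z : K, |ψ z| ≤ C := fun z => hx (Set.mem_univ z)
  intro y
  set a := ψ y with ha
  set b := ψ (y + y) with hbdef
  -- recurrence for ψ (n • y)
  have hrec : ∀ n : ℕ, ψ ((n+3) • y) = 3 * ψ ((n+2) • y) - 3 * ψ ((n+1) • y) + ψ (n • y) := by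
    intro n
    have := hdiff y (n • y)
    simp only [finDiff] at this
    have e1 : (n+1) • y = n • y + y := by rw [add_nsmul, one_nsmul]
    have e2 : (n+2) • y = n • y + y + y := by rw [add_nsmul, two_nsmul, ← add_assoc]
    have e3 : (n+3) • y = n • y + y + y + y := by
      rw [add_nsmul]
      have : (3:ℕ) • y = y + y + y := by rw [show (3:ℕ) = 1+1+1 from rfl, add_nsmul, add_nsmul, one_nsmul]
      rw [this]; abel
    rw [e1, e2, e3]
    linarith [this]
  set A := b - 2*a with hA
  set B := 4*a - b with hB
  have hquad : ∀ n : ℕ, 2 * ψ (n • y) = A * n^2 + B * n := by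
    have := rec3_zero (fun n => 2 * ψ (n • y) - (A * n^2 + B * n))
      (by simp [h0])
      (by simp only [one_nsmul, ← ha, hA, hB]; push_cast; ring)
      (by simp only [two_nsmul, ← hbdef, hA, hB]; push_cast; ring)
      (by intro n; rw [hrec n]; push_cast; ring)
    intro n
    have h := this n
    linarith
  have hb2 : ∀ n : ℕ, |A * n^2 + B * n| ≤ 2*C := by
    intro n
    rw [← hquad n, abs_mul, abs_two]
    have := hbound (n • y)
    linarith
  obtain ⟨hA0, hB0⟩ := quad_bounded_zero A B (2*C) hb2
  have := hquad 1
  simp at this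
  rw [hA0, hB0] at this
  linarith
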